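/- Let α > 0 and let u ∈ C⁴([0,1/2]) satisfy the elastica equation (1/√(1+u'²)) · d/dx( κ_u'/√(1+u'²) ) + (1/2)κ_u³ = 0 on (0,1/2), where κ_u = u''/(1+u'²)^{3/2}, with initial data u(0) = 0, u'(0) = α, u''(0) = 0, u'''(0) = β_*(α), and suppose u'(1/2) = 0. Then u'''(1/2) = β_*(α)/(1+α²)^{5/2} < 0. In particular, the symmetric extension of u to [0,1], defined by u(x) = u(1−x) for x ∈ [1/2,1], is not of class C³ at x = 1/2. -/

import Mathlib

open Real MeasureTheory

/-- The curvature of the graph `(x, u x)`. -/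
noncomputable def curv (u : ℝ → ℝ) (x : ℝ) : ℝ :=
  iteratedDeriv 2 u x / (1 + deriv u x ^ 2) ^ ((3:ℝ)/2)

/-- `u` satisfies the elastica equation
`(1/√(1+u'²)) (κ_u'/√(1+u'²))' + κ_u³/2 = 0` on the set `E`. -/
def ElasticaOn (u : ℝ → ℝ) (E : Set ℝ) : Prop :=
  ∀ x ∈ E,
    (1 / Real.sqrt (1 + deriv u x ^ 2)) *
        deriv (fun y => deriv (curv u) y / Real.sqrt (1 + deriv u y ^ 2)) x
      + (1/2) * curv u x ^ 3 = 0

/-- `β_*(α) = −2(1+α²)^{5/2} (∫₀^α (α−t)^{-1/2}(1+t²)^{-5/4} dt)²`. -/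
noncomputable def βstar (α : ℝ) : ℝ :=
  -2 * (1 + α ^ 2) ^ ((5:ℝ)/2) *
    (∫ t in (0:ℝ)..α, (α - t) ^ (-(1:ℝ)/2) * (1 + t ^ 2) ^ (-(5:ℝ)/4)) ^ 2

lemma iteratedDerivWithin_of_isOpen' {f : ℝ → ℝ} {s : Set ℝ} (hs : IsOpen s) {x : ℝ}
    (hx : x ∈ s) (n : ℕ) : iteratedDerivWithin n f s x = iteratedDeriv n f x := by
  simp only [iteratedDerivWithin, iteratedDeriv, iteratedFDerivWithin_of_isOpen n hs hx]

section aux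
variable (u : ℝ → ℝ)

noncomputable def qq (x : ℝ) : ℝ := iteratedDeriv 2 u x
noncomputable def rr (x : ℝ) : ℝ := iteratedDeriv 3 u x
noncomputable def ww (x : ℝ) : ℝ := 1 + deriv u x ^ 2
noncomputable def GG (x : ℝ) : ℝ :=
  (rr u x * ww u x - 3 * deriv u x * qq u x ^ 2) / ww u x ^ 3
noncomputable def FF (x : ℝ) : ℝ :=
  (GG u x + deriv u x * qq u x ^ 2 / (2 * ww u x ^ 3)) / Real.sqrt (ww u x)

variable {u}

lemma ww_pos (x : ℝ) : 0 < ww u x := by unfold ww; positivity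
lemma sqrt_ww_pos (x : ℝ) : 0 < Real.sqrt (ww u x) := Real.sqrt_pos.mpr (ww_pos x)
lemma sqrt_ww_sq (x : ℝ) : Real.sqrt (ww u x) * Real.sqrt (ww u x) = ww u x :=
  Real.mul_self_sqrt (ww_pos x).le

variable (hu : ContDiff ℝ 4 u)
include hu

lemma hasDerivAt_deriv_u (x : ℝ) : HasDerivAt u (deriv u x) x :=
  (hu.differentiable (by norm_num) x).hasDerivAt

lemma contDiff_deriv_u : ContDiff ℝ 3 (deriv u) :=
  (contDiff_succ_iff_deriv.mp (show ContDiff ℝ (3+1) u by exact_mod_cast hu)).2.2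

lemma qq_eq : qq u = deriv (deriv u) := by
  funext x
  simp [qq, iteratedDeriv_succ, iteratedDeriv_one]

lemma rr_eq : rr u = deriv (qq u) := by
  rw [qq_eq hu]
  funext x
  simp [rr, iteratedDeriv_succ, iteratedDeriv_one]

lemma contDiff_qq : ContDiff ℝ 2 (qq u) := by
  rw [qq_eq hu]
  exact (contDiff_succ_iff_deriv.mp
    (show ContDiff ℝ (2+1) (deriv u) by exact_mod_cast contDiff_deriv_u hu)).2.2

lemma contDiff_rr : ContDiff ℝ 1 (rr u) := by
  rw [rr_eq hu]
  exact (contDiff_succ_iff_deriv.mp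
    (show ContDiff ℝ (1+1) (qq u) by exact_mod_cast contDiff_qq hu)).2.2

lemma hasDerivAt_p (x : ℝ) : HasDerivAt (deriv u) (qq u x) x := by
  rw [qq_eq hu]
  exact ((contDiff_deriv_u hu).differentiable (by norm_num) x).hasDerivAt

lemma hasDerivAt_qq (x : ℝ) : HasDerivAt (qq u) (rr u x) x := by
  rw [rr_eq hu]
  exact ((contDiff_qq hu).differentiable (by norm_num) x).hasDerivAt

lemma hasDerivAt_ww (x : ℝ) :
    HasDerivAt (ww u) (2 * deriv u x * qq u x) x := by
  have h := ((hasDerivAt_p hu x).pow 2).const_add 1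
  refine h.congr_deriv ?_
  push_cast
  ring

lemma curv_eq : curv u = fun x => qq u x / (ww u x * Real.sqrt (ww u x)) := by
  funext x
  have h : (ww u x) ^ ((3:ℝ)/2) = ww u x * Real.sqrt (ww u x) := by
    rw [show ((3:ℝ)/2) = 1 + 1/2 by norm_num, Real.rpow_add (ww_pos x), Real.rpow_one,
      ← Real.sqrt_eq_rpow]
  show qq u x / (1 + deriv u x ^ 2) ^ ((3:ℝ)/2) = _
  rw [show (1 + deriv u x ^ 2) = ww u x from rfl, h]

lemma hasDerivAt_curv (x : ℝ) :
    HasDerivAt (curv u)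
      ((rr u x * ww u x - 3 * deriv u x * qq u x ^ 2) * Real.sqrt (ww u x) / ww u x ^ 3) x := by
  rw [curv_eq hu]
  have hD : HasDerivAt (fun y => ww u y * Real.sqrt (ww u y))
      (2 * deriv u x * qq u x * Real.sqrt (ww u x) +
        ww u x * (2 * deriv u x * qq u x / (2 * Real.sqrt (ww u x)))) x :=
    (hasDerivAt_ww hu x).mul ((hasDerivAt_ww hu x).sqrt (ww_pos x).ne')
  have hD0 : ww u x * Real.sqrt (ww u x) ≠ 0 :=
    mul_ne_zero (ww_pos x).ne' (sqrt_ww_pos x).ne'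
  have h := (hasDerivAt_qq hu x).div hD hD0
  refine h.congr_deriv ?_
  have hs0 : Real.sqrt (ww u x) ≠ 0 := (sqrt_ww_pos x).ne'
  have hw : ww u x = Real.sqrt (ww u x) ^ 2 := (Real.sq_sqrt (ww_pos x).le).symm
  set s := Real.sqrt (ww u x) with hsdef
  rw [hw]
  field_simp
  ring

end aux

section more
variable {u : ℝ → ℝ} (hu : ContDiff ℝ 4 u)
include hu

lemma deriv_curv_over_sqrt :
    (fun y => deriv (curv u) y / Real.sqrt (1 + deriv u y ^ 2)) = GG u := by
  funext x
  have h := (hasDerivAt_curv hu x).deriv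
  show deriv (curv u) x / Real.sqrt (ww u x) = GG u x
  rw [h]
  unfold GG
  have hs0 : Real.sqrt (ww u x) ≠ 0 := (sqrt_ww_pos x).ne'
  have hw : ww u x = Real.sqrt (ww u x) ^ 2 := (Real.sq_sqrt (ww_pos x).le).symm
  rw [hw]
  field_simp

lemma hasDerivAt_GG (x : ℝ) : HasDerivAt (GG u) (deriv (GG u) x) x := by
  have hr : HasDerivAt (rr u) (deriv (rr u) x) x :=
    (((contDiff_rr hu).differentiable (by norm_num)) x).hasDerivAt
  have hnum := (hr.mul (hasDerivAt_ww hu x)).sub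
    (((hasDerivAt_p hu x).const_mul 3).mul ((hasDerivAt_qq hu x).pow 2))
  have hden := (hasDerivAt_ww hu x).pow 3
  have h := hnum.div hden (pow_ne_zero 3 (ww_pos x).ne')
  exact h.differentiableAt.hasDerivAt

lemma deriv_GG_eq (x : ℝ)
    (hx : (1 / Real.sqrt (1 + deriv u x ^ 2)) *
        deriv (fun y => deriv (curv u) y / Real.sqrt (1 + deriv u y ^ 2)) x
      + (1/2) * curv u x ^ 3 = 0) :
    deriv (GG u) x = -(qq u x) ^ 3 / (2 * ww u x ^ 4) := by
  rw [deriv_curv_over_sqrt hu] at hx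
  simp only [curv_eq hu] at hx
  rw [show (1 + deriv u x ^ 2) = ww u x from rfl] at hx
  have hs0 : Real.sqrt (ww u x) ≠ 0 := (sqrt_ww_pos x).ne'
  set S := Real.sqrt (ww u x) with hS
  simp only [ww] at hx ⊢
  have hs2 : S ^ 2 = 1 + deriv u x ^ 2 := by
    rw [hS]; exact Real.sq_sqrt (ww_pos x).le
  rw [← hs2] at hx ⊢
  field_simp at hx
  have key : deriv (GG u) x * (2 * S ^ 8) + qq u x ^ 3 = 0 := by
    have h2 : S * (deriv (GG u) x * (2 * S ^ 8) + qq u x ^ 3) = 0 := by linear_combination S * hx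
    rcases mul_eq_zero.mp h2 with h | h
    · exact absurd h hs0
    · exact h
  rw [eq_div_iff (mul_ne_zero two_ne_zero (pow_ne_zero 4 (pow_ne_zero 2 hs0)))]
  linear_combination key

lemma hasDerivAt_FF_zero (x : ℝ)
    (hGd : deriv (GG u) x = -(qq u x) ^ 3 / (2 * ww u x ^ 4)) :
    HasDerivAt (FF u) 0 x := by
  have hterm := ((hasDerivAt_p hu x).mul ((hasDerivAt_qq hu x).pow 2)).div
    (((hasDerivAt_ww hu x).pow 3).const_mul 2)
    (by have := ww_pos (u := u) x; simp only [Pi.pow_apply]; positivity)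
  have hnum := (hasDerivAt_GG hu x).add hterm
  have hsq := (hasDerivAt_ww hu x).sqrt (ww_pos x).ne'
  have h := hnum.div hsq (sqrt_ww_pos x).ne'
  have : HasDerivAt (FF u) _ x := h
  convert this using 1
  rw [hGd]
  have hs0 : Real.sqrt (ww u x) ≠ 0 := (sqrt_ww_pos x).ne'
  set S := Real.sqrt (ww u x) with hS
  simp only [Pi.add_apply, Pi.mul_apply, Pi.div_apply, Pi.pow_apply, GG, ww]
  have hs2 : S ^ 2 = 1 + deriv u x ^ 2 := by
    rw [hS]; exact Real.sq_sqrt (ww_pos x).le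
  rw [← hs2]
  push_cast
  field_simp
  linear_combination (-(qq u x ^ 3)) * hs2

lemma differentiable_FF : Differentiable ℝ (FF u) := by
  intro x
  have hterm := ((hasDerivAt_p hu x).mul ((hasDerivAt_qq hu x).pow 2)).div
    (((hasDerivAt_ww hu x).pow 3).const_mul 2)
    (by have := ww_pos (u := u) x; simp only [Pi.pow_apply]; positivity)
  have hnum := (hasDerivAt_GG hu x).add hterm
  have hsq := (hasDerivAt_ww hu x).sqrt (ww_pos x).ne'
  have h := hnum.div hsq (sqrt_ww_pos x).ne'
  exact (h.differentiableAt : DifferentiableAt ℝ (FF u) x)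

end more


/-- For the shooting solution, `u'''(1/2) = β_*(α)/(1+α²)^{5/2} < 0`; in particular the
symmetric extension `x ↦ u(min x (1−x))` to `[0,1]` is not `C³` at `x = 1/2`. -/
theorem stmt_15 (α : ℝ) (hα : 0 < α) (u : ℝ → ℝ) (hu : ContDiff ℝ 4 u)
    (heq : ElasticaOn u (Set.Ioo 0 (1/2)))
    (h0 : u 0 = 0) (h1 : deriv u 0 = α) (h2 : iteratedDeriv 2 u 0 = 0)
    (h3 : iteratedDeriv 3 u 0 = βstar α) (hend : deriv u (1/2) = 0) :
    iteratedDeriv 3 u (1/2) = βstar α / (1 + α ^ 2) ^ ((5:ℝ)/2) ∧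
    βstar α / (1 + α ^ 2) ^ ((5:ℝ)/2) < 0 ∧
    ¬ ContDiffAt ℝ 3 (fun x : ℝ => if x ≤ 1/2 then u x else u (1 - x)) (1/2) := by
  -- FF has zero derivative on the open interval
  have hde : ∀ x ∈ Set.Ioo (0:ℝ) (1/2), HasDerivAt (FF u) 0 x := fun x hx =>
    hasDerivAt_FF_zero hu x (deriv_GG_eq hu x (heq x hx))
  have hcont : Continuous (FF u) := (differentiable_FF hu).continuous
  -- FF is constant on the open interval
  have hmid : ∀ x ∈ Set.Ioo (0:ℝ) (1/2), FF u x = FF u (1/4) := by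
    intro x hx
    rcases le_total x (1/4) with hle | hle
    · have hcst := constant_of_has_deriv_right_zero (f := FF u) (a := x) (b := 1/4)
        hcont.continuousOn (fun y hy => (hde y ⟨lt_of_lt_of_le hx.1 hy.1,
          lt_trans hy.2 (by norm_num)⟩).hasDerivWithinAt)
      exact (hcst (1/4) ⟨hle, le_refl _⟩).symm
    · have hcst := constant_of_has_deriv_right_zero (f := FF u) (a := 1/4) (b := x)
        hcont.continuousOn (fun y hy => (hde y ⟨lt_of_lt_of_le (by norm_num) hy.1,
          lt_trans hy.2 hx.2⟩).hasDerivWithinAt)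
      exact hcst x ⟨hle, le_refl _⟩
  have hIoo0 : Set.Ioo (0:ℝ) (1/2) ∈ nhdsWithin (0:ℝ) (Set.Ioi 0) :=
    Ioo_mem_nhdsGT_of_mem ⟨le_refl _, by norm_num⟩
  have hIoo12 : Set.Ioo (0:ℝ) (1/2) ∈ nhdsWithin (1/2:ℝ) (Set.Iio (1/2)) :=
    Ioo_mem_nhdsLT_of_mem ⟨by norm_num, le_refl _⟩
  have h0c : FF u 0 = FF u (1/4) := by
    have t1 : Filter.Tendsto (FF u) (nhdsWithin 0 (Set.Ioi 0)) (nhds (FF u 0)) :=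
      hcont.continuousAt.continuousWithinAt
    have t2 : Filter.Tendsto (FF u) (nhdsWithin 0 (Set.Ioi 0)) (nhds (FF u (1/4))) := by
      refine Filter.Tendsto.congr' ?_ tendsto_const_nhds
      filter_upwards [hIoo0] with y hy using (hmid y hy).symm
    exact tendsto_nhds_unique t1 t2
  have h12c : FF u (1/2) = FF u (1/4) := by
    have t1 : Filter.Tendsto (FF u) (nhdsWithin (1/2) (Set.Iio (1/2))) (nhds (FF u (1/2))) :=
      hcont.continuousAt.continuousWithinAt
    have t2 : Filter.Tendsto (FF u) (nhdsWithin (1/2) (Set.Iio (1/2)))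
        (nhds (FF u (1/4))) := by
      refine Filter.Tendsto.congr' ?_ tendsto_const_nhds
      filter_upwards [hIoo12] with y hy using (hmid y hy).symm
    exact tendsto_nhds_unique t1 t2
  -- evaluation at the two endpoints
  have h52 : (1 + α^2) ^ ((5:ℝ)/2) = (1+α^2)^2 * Real.sqrt (1+α^2) := by
    rw [show ((5:ℝ)/2) = (2:ℕ) + 1/2 by norm_num, Real.rpow_add (by positivity),
      Real.rpow_natCast, ← Real.sqrt_eq_rpow]
  have hsqa : Real.sqrt (1 + α^2) ≠ 0 := by positivity
  have eF0 : FF u 0 = βstar α / (1 + α^2) ^ ((5:ℝ)/2) := by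
    simp only [FF, GG, ww, qq, rr, h1, h2, h3]
    rw [h52]
    field_simp
    ring
  have eF12 : FF u (1/2) = iteratedDeriv 3 u (1/2) := by
    simp only [FF, GG, ww, qq, rr, hend]
    norm_num
  have hval : iteratedDeriv 3 u (1/2) = βstar α / (1 + α ^ 2) ^ ((5:ℝ)/2) := by
    rw [← eF12, h12c, ← h0c, eF0]
  -- negativity
  have hneg : βstar α / (1 + α ^ 2) ^ ((5:ℝ)/2) < 0 := by
    apply div_neg_of_neg_of_pos
    · have hI : 0 < ∫ t in (0:ℝ)..α, (α - t) ^ (-(1:ℝ)/2) * (1 + t ^ 2) ^ (-(5:ℝ)/4) := by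
        have hint : IntervalIntegrable (fun t : ℝ => (α - t) ^ (-(1:ℝ)/2)) volume 0 α := by
          have ha : IntervalIntegrable (fun s : ℝ => s ^ (-(1:ℝ)/2)) volume α 0 :=
            intervalIntegral.intervalIntegrable_rpow' (by norm_num)
          simpa using ha.comp_sub_left α
        have hint2 : IntervalIntegrable
            (fun t : ℝ => (α - t) ^ (-(1:ℝ)/2) * (1 + t ^ 2) ^ (-(5:ℝ)/4)) volume 0 α := by
          apply hint.mul_continuousOn
          apply ContinuousOn.rpow_const
          · fun_prop
          · intro t _
            left
            positivity
        apply intervalIntegral.intervalIntegral_pos_of_pos_on hint2 _ hα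
        intro t ht
        have hat : 0 < α - t := by linarith [ht.2]
        have h2t : (0:ℝ) < 1 + t ^ 2 := by positivity
        positivity
      have hA : (0:ℝ) < (1 + α ^ 2) ^ ((5:ℝ)/2) := Real.rpow_pos_of_pos (by positivity) _
      unfold βstar
      nlinarith [mul_pos hA (pow_pos hI 2)]
    · exact Real.rpow_pos_of_pos (by positivity) _
  refine ⟨hval, hneg, ?_⟩
  intro hC3
  set c := βstar α / (1 + α ^ 2) ^ ((5:ℝ)/2) with hc
  set v := (fun x : ℝ => if x ≤ 1/2 then u x else u (1 - x)) with hv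
  obtain ⟨s, hsmem, hcd⟩ := hC3.contDiffOn le_rfl (by simp)
  obtain ⟨ε, hε, hball⟩ := Metric.mem_nhds_iff.mp hsmem
  set B := Metric.ball (1/2:ℝ) ε with hB
  have hopen : IsOpen B := Metric.isOpen_ball
  have hmemB : (1/2:ℝ) ∈ B := Metric.mem_ball_self hε
  have hcd' : ContDiffOn ℝ 3 v B := hcd.mono hball
  have hco : ContinuousOn (iteratedDerivWithin 3 v B) B :=
    hcd'.continuousOn_iteratedDerivWithin le_rfl hopen.uniqueDiffOn
  have hca : Filter.Tendsto (iteratedDerivWithin 3 v B) (nhds (1/2:ℝ))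
      (nhds (iteratedDerivWithin 3 v B (1/2))) :=
    (hco.continuousAt (hopen.mem_nhds hmemB)).tendsto
  have hq3c : Continuous (iteratedDeriv 3 u) := hu.continuous_iteratedDeriv 3 (by norm_num)
  have hBleft : B ∈ nhdsWithin (1/2:ℝ) (Set.Iio (1/2)) :=
    nhdsWithin_le_nhds (hopen.mem_nhds hmemB)
  have hBright : B ∈ nhdsWithin (1/2:ℝ) (Set.Ioi (1/2)) :=
    nhdsWithin_le_nhds (hopen.mem_nhds hmemB)
  -- left limit equals c
  have hLc : iteratedDerivWithin 3 v B (1/2) = c := by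
    have hEq : ∀ᶠ x in nhdsWithin (1/2:ℝ) (Set.Iio (1/2)),
        iteratedDerivWithin 3 v B x = iteratedDeriv 3 u x := by
      filter_upwards [hBleft, self_mem_nhdsWithin] with x hxB (hxlt : x < 1/2)
      rw [iteratedDerivWithin_of_isOpen' hopen hxB]
      apply Filter.EventuallyEq.iteratedDeriv_eq
      filter_upwards [Iio_mem_nhds hxlt] with y (hy : y < 1/2)
      show (if y ≤ 1/2 then u y else u (1 - y)) = u y
      rw [if_pos hy.le]
    have t1 : Filter.Tendsto (iteratedDerivWithin 3 v B)
        (nhdsWithin (1/2:ℝ) (Set.Iio (1/2))) (nhds (iteratedDerivWithin 3 v B (1/2))) :=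
      hca.mono_left nhdsWithin_le_nhds
    have t2 : Filter.Tendsto (iteratedDerivWithin 3 v B)
        (nhdsWithin (1/2:ℝ) (Set.Iio (1/2))) (nhds c) := by
      refine Filter.Tendsto.congr' (hEq.mono fun x h => h.symm) ?_
      have tt : Filter.Tendsto (iteratedDeriv 3 u) (nhdsWithin (1/2:ℝ) (Set.Iio (1/2)))
          (nhds (iteratedDeriv 3 u (1/2))) :=
        (hq3c.tendsto _).mono_left nhdsWithin_le_nhds
      rwa [hval] at tt
    exact tendsto_nhds_unique t1 t2
  -- right limit equals -c
  have it3g : ∀ x : ℝ, iteratedDeriv 3 (fun y => u (1 - y)) x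
      = -(iteratedDeriv 3 u (1 - x)) := by
    intro x
    have e1 : (fun y : ℝ => u (1 - y)) = (fun y : ℝ => u (1 + -y)) := by
      funext y
      rw [sub_eq_add_neg]
    have h2' : iteratedDeriv 3 (fun y : ℝ => u (1 + -y)) x
        = (-1:ℝ)^3 • iteratedDeriv 3 (fun z : ℝ => u (1 + z)) (-x) :=
      iteratedDeriv_comp_neg 3 (fun z : ℝ => u (1 + z)) x
    rw [e1, h2']
    simp only [iteratedDeriv_comp_const_add]
    norm_num [sub_eq_add_neg]
  have hRc : iteratedDerivWithin 3 v B (1/2) = -c := by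
    have hEq : ∀ᶠ x in nhdsWithin (1/2:ℝ) (Set.Ioi (1/2)),
        iteratedDerivWithin 3 v B x = -(iteratedDeriv 3 u (1 - x)) := by
      filter_upwards [hBright, self_mem_nhdsWithin] with x hxB (hxgt : 1/2 < x)
      rw [iteratedDerivWithin_of_isOpen' hopen hxB]
      have hvv : iteratedDeriv 3 v x = iteratedDeriv 3 (fun y => u (1 - y)) x := by
        apply Filter.EventuallyEq.iteratedDeriv_eq
        filter_upwards [Ioi_mem_nhds hxgt] with y (hy : 1/2 < y)
        show (if y ≤ 1/2 then u y else u (1 - y)) = u (1 - y)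
        rw [if_neg (not_le.mpr hy)]
      rw [hvv, it3g x]
    have t1 : Filter.Tendsto (iteratedDerivWithin 3 v B)
        (nhdsWithin (1/2:ℝ) (Set.Ioi (1/2))) (nhds (iteratedDerivWithin 3 v B (1/2))) :=
      hca.mono_left nhdsWithin_le_nhds
    have t2 : Filter.Tendsto (iteratedDerivWithin 3 v B)
        (nhdsWithin (1/2:ℝ) (Set.Ioi (1/2))) (nhds (-c)) := by
      refine Filter.Tendsto.congr' (hEq.mono fun x h => h.symm) ?_
      have hcont' : Continuous (fun x : ℝ => -(iteratedDeriv 3 u (1 - x))) :=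
        (hq3c.comp (continuous_const.sub continuous_id)).neg
      have tt : Filter.Tendsto (fun x : ℝ => -(iteratedDeriv 3 u (1 - x)))
          (nhdsWithin (1/2:ℝ) (Set.Ioi (1/2)))
          (nhds (-(iteratedDeriv 3 u ((1:ℝ) - 1/2)))) :=
        (hcont'.tendsto _).mono_left nhdsWithin_le_nhds
      rwa [show (1:ℝ) - 1/2 = 1/2 by norm_num, hval] at tt
    exact tendsto_nhds_unique t1 t2
  rw [hLc] at hRc
  rw [hc] at hRc
  linarith
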